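/- arXiv:2104.11121 — 4 statements merged into one kernel-verified Lean document; each statement's English description precedes it below -/
import Mathlib

section
/- Two signed graphs on the same underlying simple graph are switching equivalent if and only if they have the same set of balanced cycles. -/
open SimpleGraph

/-- Switching a vertex `v`: the sign of every edge incident to `v` is negated. -/
def switchOne {V : Type*} [DecidableEq V] {G : SimpleGraph V} (v : V)
    (σ : G.edgeSet → Bool) : G.edgeSet → Bool :=
  fun e => if v ∈ (e : Sym2 V) then !(σ e) else σ e

/-- Two signatures on the same underlying graph are switching equivalent if one
can be obtained from the other by a sequence of vertex switches. -/
def SwitchEquiv {V : Type*} [DecidableEq V] {G : SimpleGraph V}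
    (σ₁ σ₂ : G.edgeSet → Bool) : Prop :=
  Relation.ReflTransGen (fun τ τ' => ∃ v : V, τ' = switchOne v τ) σ₁ σ₂

/-- The number of negative edges of a walk, counted with multiplicity. -/
def negCount {V : Type*} (G : SimpleGraph V) (σ : G.edgeSet → Bool)
    {a b : V} (w : G.Walk a b) : ℕ :=
  (w.darts.map (fun d => σ ⟨d.edge, d.edge_mem⟩)).count false

namespace Zas

variable {V : Type*} [DecidableEq V] {G : SimpleGraph V}

/-- mod-2 weight of a walk w.r.t. a `ZMod 2`-valued edge labelling -/
def wts (δ : G.edgeSet → ZMod 2) {a b : V} (w : G.Walk a b) : ZMod 2 :=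
  (w.darts.map (fun d => δ ⟨d.edge, d.edge_mem⟩)).sum

/-- indicator of negativity -/
def ind (σ : G.edgeSet → Bool) (e : G.edgeSet) : ZMod 2 := if σ e then 0 else 1

@[simp] lemma wts_nil (δ : G.edgeSet → ZMod 2) {a : V} :
    wts δ (Walk.nil : G.Walk a a) = 0 := rfl

@[simp] lemma wts_cons (δ : G.edgeSet → ZMod 2) {a b c : V} (h : G.Adj a b)
    (p : G.Walk b c) :
    wts δ (Walk.cons h p) = δ ⟨s(a, b), h⟩ + wts δ p := by
  simp [wts, Walk.darts_cons, Dart.edge]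

@[simp] lemma wts_append (δ : G.edgeSet → ZMod 2) {a b c : V} (p : G.Walk a b)
    (q : G.Walk b c) :
    wts δ (p.append q) = wts δ p + wts δ q := by
  simp [wts, Walk.darts_append]

@[simp] lemma wts_copy (δ : G.edgeSet → ZMod 2) {a b a' b' : V} (p : G.Walk a b)
    (h1 : a = a') (h2 : b = b') :
    wts δ (p.copy h1 h2) = wts δ p := by
  simp [wts, Walk.darts_copy]

@[simp] lemma wts_reverse (δ : G.edgeSet → ZMod 2) {a b : V} (p : G.Walk a b) :
    wts δ p.reverse = wts δ p := by
  unfold wts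
  rw [Walk.darts_reverse, List.map_reverse, List.sum_reverse, List.map_map]
  have : ((fun d : G.Dart => δ ⟨d.edge, d.edge_mem⟩) ∘ Dart.symm)
      = fun d : G.Dart => δ ⟨d.edge, d.edge_mem⟩ :=
    funext fun d => congrArg δ (Subtype.ext d.edge_symm)
  rw [this]

lemma count_false_cast (l : List Bool) :
    ((l.count false : ZMod 2)) = (l.map (fun b => if b then (0 : ZMod 2) else 1)).sum := by
  induction l with
  | nil => simp
  | cons b t ih =>
    cases b <;> simp [List.count_cons, ih] <;> ring

lemma negCount_cast (σ : G.edgeSet → Bool) {a b : V} (w : G.Walk a b) :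
    ((negCount G σ w : ZMod 2)) = wts (ind σ) w := by
  unfold negCount wts
  rw [count_false_cast, List.map_map]
  rfl

lemma even_negCount_iff (σ : G.edgeSet → Bool) {a b : V} (w : G.Walk a b) :
    Even (negCount G σ w) ↔ wts (ind σ) w = 0 := by
  rw [← negCount_cast, Nat.even_iff, ← Nat.dvd_iff_mod_eq_zero, ← ZMod.natCast_eq_zero_iff]

lemma ind_switchOne (v : V) (σ : G.edgeSet → Bool) (e : G.edgeSet) :
    ind (switchOne v σ) e = ind σ e + (if v ∈ (e : Sym2 V) then 1 else 0) := by
  unfold ind switchOne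
  by_cases h : v ∈ (e : Sym2 V) <;> cases hσ : σ e <;> simp [h, hσ] <;> decide

lemma wts_switchOne (v : V) (σ : G.edgeSet → Bool) {a b : V} (w : G.Walk a b) :
    wts (ind (switchOne v σ)) w
      = wts (ind σ) w + (if v = a then 1 else 0) + (if v = b then 1 else 0) := by
  induction w with
  | nil =>
    rename_i u
    by_cases h : v = u <;> simp [h] <;> decide
  | @cons x y z h p ih =>
    rw [wts_cons, wts_cons, ih, ind_switchOne]
    have hmem : (if v ∈ (s(x, y) : Sym2 V) then (1 : ZMod 2) else 0)
        = (if v = x then 1 else 0) + (if v = y then 1 else 0) := by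
      by_cases h1 : v = x
      · subst h1
        simp [Sym2.mem_iff, h.ne]
      · by_cases h2 : v = y
        · subst h2
          simp [Sym2.mem_iff, h1, (h.ne.symm : v ≠ x)]
        · simp [Sym2.mem_iff, h1, h2]
    rw [hmem]
    have key : ∀ x y z w u : ZMod 2,
        x + (y + z) + (w + z + u) = x + w + y + u := by decide
    exact key _ _ _ _ _

lemma wts_switchOne_closed (v : V) (σ : G.edgeSet → Bool) {a : V} (w : G.Walk a a) :
    wts (ind (switchOne v σ)) w = wts (ind σ) w := by
  rw [wts_switchOne]
  have key : ∀ x y : ZMod 2, x + y + y = x := by decide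
  exact key _ _

-- path sub-lemma: a path from b to a containing edge s(a,b) has length 1
lemma path_edge_length_one {b a : V} (hne : a ≠ b) :
    ∀ (p : G.Walk b a), p.support.Nodup → s(a, b) ∈ p.edges → p.length = 1 := by
  intro p
  cases p with
  | nil => intro _ hmem; simp at hmem
  | @cons _ c _ h' q =>
    intro hnd hmem
    rw [Walk.support_cons, List.nodup_cons] at hnd
    rw [Walk.edges_cons, List.mem_cons] at hmem
    rcases hmem with hmem | hmem
    · -- s(a,b) = s(b,c) forces a = c
      have hac : a = c := by
        rw [Sym2.eq_iff] at hmem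
        rcases hmem with ⟨h1, h2⟩ | ⟨h1, h2⟩
        · exact absurd h1 hne
        · exact h1
      subst hac
      -- q : G.Walk a a with nodup support must be nil
      cases q with
      | nil => simp
      | @cons _ d _ h'' r =>
        exfalso
        have hnd2 := hnd.2
        rw [Walk.support_cons, List.nodup_cons] at hnd2
        exact hnd2.1 r.end_mem_support
    · exfalso
      have : b ∈ q.support := q.snd_mem_support_of_mem_edges hmem
      exact hnd.1 this

lemma closed_wts_zero (δ : G.edgeSet → ZMod 2)
    (H : ∀ (a : V) (w : G.Walk a a), w.IsCycle → wts δ w = 0) :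
    ∀ (n : ℕ) (a : V) (w : G.Walk a a), w.length ≤ n → wts δ w = 0 := by
  intro n
  induction n with
  | zero =>
    intro a w hw
    cases w with
    | nil => rfl
    | cons h p => simp [Walk.length_cons] at hw
  | succ n ih =>
    intro a w hw
    cases w with
    | nil => rfl
    | @cons _ b _ h p =>
      by_cases hnd : p.support.Nodup
      · -- p is a path from b to a
        by_cases hlen : p.length ≤ 1
        · -- short cases
          cases p with
          | nil => exact absurd rfl h.ne
          | @cons _ c _ h' q =>
            have hq0 : q.length = 0 := by
              have := Walk.length_cons h' q
              omega
            have hca : c = a := Walk.eq_of_length_eq_zero hq0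
            subst hca
            have hq : wts δ q = 0 := ih _ q (by omega)
            rw [wts_cons, wts_cons, hq]
            have hedge : (⟨s(b, c), h'⟩ : G.edgeSet) = ⟨s(c, b), h⟩ := by
              exact Subtype.ext (Sym2.eq_swap)
            rw [hedge]
            have key : ∀ x : ZMod 2, x + (x + 0) = 0 := by decide
            exact key _
        · -- length ≥ 2 : cons h p is a cycle
          push_neg at hlen
          have hnotmem : s(a, b) ∉ p.edges := by
            intro hmem
            have := path_edge_length_one h.ne p hnd hmem
            omega
          have hcyc : (Walk.cons h p).IsCycle :=
            (Walk.cons_isCycle_iff p h).mpr ⟨Walk.IsPath.mk' hnd, hnotmem⟩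
          exact H a _ hcyc
      · -- p has a repeated vertex : decompose
        obtain ⟨v, hv2⟩ : ∃ v, 1 < p.support.count v := by
          by_contra hc
          push_neg at hc
          exact hnd (List.nodup_iff_count_le_one.mpr hc)
        have hv : v ∈ p.support := by
          rw [← List.count_pos_iff]
          omega
        have hsplit := p.take_spec hv
        set t := p.takeUntil v hv with ht
        set d := p.dropUntil v hv with hd
        have htc : t.support.count v = 1 := p.count_support_takeUntil_eq_one hv
        have hvd : v ∈ d.support.tail := by
          have hsup : p.support = t.support ++ d.support.tail := by
            rw [← hsplit]; exact Walk.support_append t d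
          rw [← List.count_pos_iff]
          have := List.count_append (a := v) (l₁ := t.support) (l₂ := d.support.tail)
          rw [← hsup] at this
          omega
        have hdnn : ¬ d.Nil := by
          intro hnil
          rw [Walk.nil_iff_length_eq] at hnil
          have h1 : d.support.tail.length = 0 := by
            rw [List.length_tail, Walk.length_support, hnil]
          rw [List.eq_nil_of_length_eq_zero h1] at hvd
          exact absurd hvd (List.not_mem_nil (a := v))
        obtain ⟨c, h'', r, hdr⟩ := Walk.not_nil_iff.mp hdnn
        have hvr : v ∈ r.support := by
          rw [hdr, Walk.support_cons, List.tail_cons] at hvd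
          exact hvd
        have hrsplit := r.take_spec hvr
        set r1 := r.takeUntil v hvr with hr1
        set r2 := r.dropUntil v hvr with hr2
        -- lengths
        have hlensum : p.length = t.length + (1 + (r1.length + r2.length)) := by
          have h1 : p.length = t.length + d.length := by
            rw [← hsplit, Walk.length_append]
          have h2 : d.length = 1 + r.length := by
            rw [hdr, Walk.length_cons]; omega
          have h3 : r.length = r1.length + r2.length := by
            rw [← hrsplit, Walk.length_append]
          omega
        have hwlen : (Walk.cons h p).length = 1 + p.length := by
          rw [Walk.length_cons]; omega
        -- the two shorter closed walks
        have hw1 : wts δ (Walk.cons h (t.append r2)) = 0 := by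
          apply ih
          rw [Walk.length_cons, Walk.length_append]
          omega
        have hw2 : wts δ (Walk.cons h'' r1) = 0 := by
          apply ih
          rw [Walk.length_cons]
          omega
        -- rewrite w
        have hpw : p = t.append (Walk.cons h'' (r1.append r2)) := by
          rw [← hsplit, hdr, hrsplit]
        rw [hpw]
        rw [wts_cons, wts_append, wts_cons, wts_append]
        rw [wts_cons, wts_append] at hw1
        rw [wts_cons] at hw2
        have key : ∀ e t e2 x y : ZMod 2,
            e + (t + x) = 0 → e2 + y = 0 → e + (t + (e2 + (y + x))) = 0 := by decide
        exact key _ _ _ _ _ hw1 hw2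

/-- independence of weight from the choice of walk, given all closed walks are balanced -/
lemma wts_indep (δ : G.edgeSet → ZMod 2)
    (H0 : ∀ (a : V) (w : G.Walk a a), wts δ w = 0)
    {x y : V} (p q : G.Walk x y) : wts δ p = wts δ q := by
  have h := H0 x (p.append q.reverse)
  rw [wts_append, wts_reverse] at h
  have key : ∀ a b : ZMod 2, a + b = 0 → a = b := by decide
  exact key _ _ h

/-- iterated switching along a list of vertices -/
def swl (l : List V) (σ : G.edgeSet → Bool) : G.edgeSet → Bool :=
  l.foldr switchOne σ

lemma switchEquiv_swl (l : List V) (σ : G.edgeSet → Bool) :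
    SwitchEquiv σ (swl l σ) := by
  induction l with
  | nil => exact Relation.ReflTransGen.refl
  | cons x l ih => exact Relation.ReflTransGen.tail ih ⟨x, rfl⟩

lemma ind_swl (l : List V) (σ : G.edgeSet → Bool) (e : G.edgeSet) :
    ind (swl l σ) e
      = ind σ e + ((l.countP (fun x => decide (x ∈ (e : Sym2 V)))) : ZMod 2) := by
  induction l with
  | nil => simp [swl]
  | cons x l ih =>
    have hstep : ind (swl (x :: l) σ) e
        = ind (swl l σ) e + (if x ∈ (e : Sym2 V) then 1 else 0) :=
      ind_switchOne x (swl l σ) e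
    rw [hstep, ih, List.countP_cons]
    by_cases hx : x ∈ (e : Sym2 V) <;> simp [hx] <;> push_cast <;> ring

lemma countP_mem_sym2 (u v : V) (huv : u ≠ v) (l : List V) :
    l.countP (fun x => decide (x ∈ (s(u, v) : Sym2 V))) = l.count u + l.count v := by
  induction l with
  | nil => simp
  | cons x l ih =>
    rw [List.countP_cons, List.count_cons, List.count_cons, ih]
    by_cases h1 : x = u
    · subst h1
      simp [Sym2.mem_iff, huv]
      omega
    · by_cases h2 : x = v
      · subst h2
        simp [Sym2.mem_iff, h1]
        omega
      · simp [Sym2.mem_iff, h1, h2]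

lemma wts_add (δ1 δ2 : G.edgeSet → ZMod 2) {a b : V} (w : G.Walk a b) :
    wts (fun e => δ1 e + δ2 e) w = wts δ1 w + wts δ2 w := by
  induction w with
  | nil => simp
  | cons h p ih =>
    rw [wts_cons, wts_cons, wts_cons, ih]
    ring

lemma switchEquiv_closed {σ₁ σ₂ : G.edgeSet → Bool} (h : SwitchEquiv σ₁ σ₂)
    {a : V} (w : G.Walk a a) : wts (ind σ₂) w = wts (ind σ₁) w := by
  induction h with
  | refl => rfl
  | tail _ hstep ih =>
    obtain ⟨v, rfl⟩ := hstep
    rw [wts_switchOne_closed, ih]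

lemma bool_of_ind_eq : ∀ (x y : Bool),
    (if x then (0 : ZMod 2) else 1) = (if y then 0 else 1) → x = y := by decide

end Zas

open Zas in
/-- Zaslavsky's theorem: two signed graphs on the same underlying simple graph
are switching equivalent if and only if they have the same set of balanced
cycles. -/
theorem switchEquiv_iff_same_balanced_cycles {V : Type*} [Fintype V]
    [DecidableEq V] (G : SimpleGraph V) (σ₁ σ₂ : G.edgeSet → Bool) :
    SwitchEquiv σ₁ σ₂ ↔
      ∀ (a : V) (w : G.Walk a a), w.IsCycle →
        (Even (negCount G σ₁ w) ↔ Even (negCount G σ₂ w)) := by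
  constructor
  · intro h a w _
    rw [even_negCount_iff, even_negCount_iff, switchEquiv_closed h w]
  · intro H
    classical
    set δ : G.edgeSet → ZMod 2 := fun e => ind σ₁ e + ind σ₂ e with hδ
    have Hcyc : ∀ (a : V) (w : G.Walk a a), w.IsCycle → wts δ w = 0 := by
      intro a w hc
      have h12 := H a w hc
      rw [even_negCount_iff, even_negCount_iff] at h12
      rw [hδ, wts_add]
      have key : ∀ x y : ZMod 2, (x = 0 ↔ y = 0) → x + y = 0 := by decide
      exact key _ _ h12
    have H0 : ∀ (a : V) (w : G.Walk a a), wts δ w = 0 :=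
      fun a w => closed_wts_zero δ Hcyc w.length a w le_rfl
    -- potential function from a root in each component
    have hreach : ∀ v : V, G.Reachable (G.connectedComponentMk v).out v := by
      intro v
      exact SimpleGraph.ConnectedComponent.eq.mp (Quot.out_eq _)
    set f : V → ZMod 2 := fun v => wts δ (hreach v).some with hf
    have hedge : ∀ (u v : V) (h : G.Adj u v), δ ⟨s(u, v), h⟩ = f u + f v := by
      intro u v h
      have hcc : (G.connectedComponentMk v).out = (G.connectedComponentMk u).out := by
        rw [SimpleGraph.ConnectedComponent.connectedComponentMk_eq_of_adj h]
      have hind := wts_indep δ H0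
        ((hreach u).some.append (SimpleGraph.Walk.cons h SimpleGraph.Walk.nil))
        (((hreach v).some).copy hcc rfl)
      rw [wts_append, wts_cons, wts_nil, wts_copy] at hind
      have key : ∀ x y z : ZMod 2, x + (y + 0) = z → y = x + z := by decide
      exact key _ _ _ hind
    set l : List V := (Finset.univ.filter (fun v => f v = 1)).toList with hl
    have hnodup : l.Nodup := Finset.nodup_toList _
    have hcount : ∀ u : V, ((l.count u : ZMod 2)) = f u := by
      intro u
      by_cases hu : f u = 1
      · have hm : u ∈ l := by
          rw [hl, Finset.mem_toList, Finset.mem_filter]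
          exact ⟨Finset.mem_univ u, hu⟩
        rw [List.count_eq_one_of_mem hnodup hm, hu, Nat.cast_one]
      · have hu0 : f u = 0 := by
          revert hu
          generalize f u = x
          revert x
          decide
        have hm : u ∉ l := by
          rw [hl, Finset.mem_toList, Finset.mem_filter]
          rintro ⟨-, h1⟩
          exact hu h1
        rw [List.count_eq_zero_of_not_mem hm, hu0, Nat.cast_zero]
    have hind : ∀ e : G.edgeSet, ind (swl l σ₁) e = ind σ₂ e := by
      rintro ⟨es, he⟩
      revert he
      induction es using Sym2.ind with
      | _ u v =>
        intro he
        have hadj : G.Adj u v := G.mem_edgeSet.mp he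
        rw [ind_swl, countP_mem_sym2 u v hadj.ne l]
        push_cast
        rw [hcount u, hcount v]
        have h1 : δ ⟨s(u, v), he⟩ = f u + f v := hedge u v hadj
        have h2 : ind σ₁ ⟨s(u, v), he⟩ + ind σ₂ ⟨s(u, v), he⟩ = f u + f v := h1
        have key : ∀ x y a b : ZMod 2, x + y = a + b → x + (a + b) = y := by decide
        exact key _ _ _ _ h2
    have hfinal : swl l σ₁ = σ₂ := by
      funext e
      exact bool_of_ind_eq _ _ (hind e)
    rw [← hfinal]
    exact switchEquiv_swl l σ₁
end

section
/- For signed graphs G and H: G admits a (switching) homomorphism to H if and only if G admits a sign-preserving homomorphism to the antitwinned graph ρ(H). -/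
open SimpleGraph

/-- For signed graphs `G` and `H`: `G` admits a switching homomorphism to `H`
(i.e. a sign-preserving homomorphism after switching a set of vertices of `G`)
if and only if `G` admits a sign-preserving homomorphism to the antitwinned
graph `ρ(H)` on `V(H) × Bool`, whose edges `u^i v^j` have sign `i·j·s(uv)`. -/
theorem hom_iff_spHom_rho {VG VH : Type*} (G : SimpleGraph VG)
    (σG : VG → VG → Bool) (H : SimpleGraph VH) (σH : VH → VH → Bool) :
    (∃ (f : VG → Bool) (φ : VG → VH), ∀ u v, G.Adj u v →
        H.Adj (φ u) (φ v) ∧ σH (φ u) (φ v) = ((f u == f v) == σG u v)) ↔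
    (∃ ψ : VG → VH × Bool, ∀ u v, G.Adj u v →
        H.Adj (ψ u).1 (ψ v).1 ∧
          (((ψ u).2 == (ψ v).2) == σH (ψ u).1 (ψ v).1) = σG u v) := by
  constructor
  · rintro ⟨f, φ, h⟩
    refine ⟨fun v => (φ v, f v), fun u v huv => ?_⟩
    obtain ⟨ha, hs⟩ := h u v huv
    refine ⟨ha, ?_⟩
    simp only [hs]
    cases f u <;> cases f v <;> cases σG u v <;> rfl
  · rintro ⟨ψ, h⟩
    refine ⟨fun v => (ψ v).2, fun v => (ψ v).1, fun u v huv => ?_⟩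
    obtain ⟨ha, hs⟩ := h u v huv
    refine ⟨ha, ?_⟩
    show σH (ψ u).1 (ψ v).1 = (((ψ u).2 == (ψ v).2) == σG u v)
    rw [← hs]
    cases (ψ u).2 <;> cases (ψ v).2 <;> cases σH (ψ u).1 (ψ v).1 <;> rfl
end

section
/- There is no upper bound on the sign-preserving chromatic number of signed graphs with average degree less than 4: for every n ≥ 2, the signed graph obtained from K_n by subdividing each edge into a 2-path with one positive and one negative edge has average degree 2n(n−1)/(n + n(n−1)/2) < 4 and sign-preserving chromatic number at least n. -/
open SimpleGraph

/-- Vertices of the subdivided complete graph: the `n` branch vertices `v_i`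
together with one subdivision vertex `u_{ij}` for each pair `i < j`. -/
abbrev SubKVert (n : ℕ) := Fin n ⊕ {p : Fin n × Fin n // p.1 < p.2}

/-- The graph obtained from `K_n` by subdividing every edge once. -/
def subKAdj (n : ℕ) : SimpleGraph (SubKVert n) where
  Adj x y :=
    match x, y with
    | Sum.inl i, Sum.inr p => i = p.val.1 ∨ i = p.val.2
    | Sum.inr p, Sum.inl i => i = p.val.1 ∨ i = p.val.2
    | _, _ => False
  symm := ⟨by intro x y h; cases x <;> cases y <;> simp_all⟩
  loopless := ⟨by intro x h; cases x <;> simp_all⟩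

/-- The signature: on each subdivided edge `v_i u_{ij} v_j` (`i < j`), the edge
`v_i u_{ij}` is positive and `u_{ij} v_j` is negative. -/
def subKSign (n : ℕ) : SubKVert n → SubKVert n → Bool
  | Sum.inl i, Sum.inr p => decide (i = p.val.1)
  | Sum.inr p, Sum.inl i => decide (i = p.val.1)
  | _, _ => true

abbrev Pairs (n : ℕ) := {p : Fin n × Fin n // p.1 < p.2}

def pairEquiv (n : ℕ) : Pairs n ≃ Σ j : Fin n, Fin j.val where
  toFun p := ⟨p.val.2, ⟨p.val.1, p.prop⟩⟩
  invFun q := ⟨(⟨q.2.val, q.2.isLt.trans q.1.isLt⟩, q.1), q.2.isLt⟩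
  left_inv p := by rcases p with ⟨⟨a, b⟩, h⟩; rfl
  right_inv q := by rcases q with ⟨j, k⟩; rfl

lemma card_pairs (n : ℕ) : Fintype.card (Pairs n) = n * (n - 1) / 2 := by
  rw [Fintype.card_congr (pairEquiv n), Fintype.card_sigma]
  simp only [Fintype.card_fin]
  rw [show (∑ x : Fin n, (x:ℕ)) = ∑ i ∈ Finset.range n, i from Fin.sum_univ_eq_sum_range (fun i => i) n, Finset.sum_range_id]

def edgeMap (n : ℕ) (x : Bool × Pairs n) : (subKAdj n).edgeSet :=
  ⟨s(Sum.inl (if x.1 then x.2.val.1 else x.2.val.2), Sum.inr x.2), by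
    rw [SimpleGraph.mem_edgeSet]
    show (if x.1 then x.2.val.1 else x.2.val.2) = x.2.val.1 ∨ _
    cases x.1 <;> simp⟩

lemma edgeMap_bij (n : ℕ) : Function.Bijective (edgeMap n) := by
  constructor
  · rintro ⟨b, p⟩ ⟨c, q⟩ h
    have h' := congrArg Subtype.val h
    simp only [edgeMap, Sym2.eq_iff] at h'
    rcases h' with ⟨h1, h2⟩ | ⟨h1, h2⟩
    · obtain rfl : p = q := by simpa using h2
      have h1' : (if b then p.val.1 else p.val.2) = (if c then p.val.1 else p.val.2) := by
        simpa using h1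
      have hne : p.val.1 ≠ p.val.2 := ne_of_lt p.prop
      cases b <;> cases c <;> simp_all
    · simp at h1
  · rintro ⟨e, he⟩
    induction e using Sym2.ind with
    | _ x y =>
      rw [SimpleGraph.mem_edgeSet] at he
      match x, y with
      | Sum.inl i, Sum.inr p =>
        rcases he with h | h
        · exact ⟨(true, p), by simp [edgeMap, h]⟩
        · exact ⟨(false, p), by simp [edgeMap, h]⟩
      | Sum.inr p, Sum.inl i =>
        rcases he with h | h
        · exact ⟨(true, p), by simp [edgeMap, h, Sym2.eq_swap]⟩
        · exact ⟨(false, p), by simp [edgeMap, h, Sym2.eq_swap]⟩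

lemma edge_count (n : ℕ) : (subKAdj n).edgeSet.ncard = 2 * Fintype.card (Pairs n) := by
  rw [← Nat.card_coe_set_eq, Nat.card_congr (Equiv.ofBijective _ (edgeMap_bij n)).symm]
  simp [Nat.card_eq_fintype_card]

/-- Signed graphs of average degree less than `4` have unbounded
sign-preserving chromatic number: for every `n ≥ 2`, the signed graph obtained
from `K_n` by subdividing each edge into a path with one positive and one
negative edge has `n(n-1)` edges, `n + n(n-1)/2` vertices, average degree
`2·n(n-1)/(n + n(n-1)/2) < 4`, and admits no sign-preserving homomorphism to
any signed graph on fewer than `n` vertices. -/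
theorem spChromatic_unbounded_below_mad_four (n : ℕ) (hn : 2 ≤ n) :
    (subKAdj n).edgeSet.ncard = n * (n - 1) ∧
    Fintype.card (SubKVert n) = n + n * (n - 1) / 2 ∧
    (2 * ((subKAdj n).edgeSet.ncard : ℚ)) / (Fintype.card (SubKVert n) : ℚ) < 4 ∧
    ∀ (m : ℕ) (H : SimpleGraph (Fin m)) (σH : Fin m → Fin m → Bool)
      (φ : SubKVert n → Fin m),
      (∀ u v, (subKAdj n).Adj u v →
        H.Adj (φ u) (φ v) ∧ σH (φ u) (φ v) = subKSign n u v) →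
      n ≤ m := by
  have hcp := card_pairs n
  have heven : 2 ∣ n * (n - 1) := by
    have := Nat.even_mul_succ_self (n - 1)
    have h1 : n - 1 + 1 = n := by omega
    rw [h1] at this
    rw [mul_comm]
    exact this.two_dvd
  have hE : (subKAdj n).edgeSet.ncard = n * (n - 1) := by
    rw [edge_count, hcp, Nat.mul_div_cancel' heven]
  have hV : Fintype.card (SubKVert n) = n + n * (n - 1) / 2 := by
    rw [Fintype.card_sum, Fintype.card_fin, hcp]
  refine ⟨hE, hV, ?_, ?_⟩
  · rw [hE, hV]
    have hDpos : (0 : ℚ) < ((n + n * (n - 1) / 2 : ℕ) : ℚ) := by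
      have : 0 < n + n * (n - 1) / 2 := by omega
      exact_mod_cast this
    rw [div_lt_iff₀ hDpos]
    have hnat : 2 * (n * (n - 1)) < 4 * (n + n * (n - 1) / 2) := by
      obtain ⟨k, hk⟩ := heven
      rw [hk]
      omega
    calc (2 * ((n * (n - 1) : ℕ) : ℚ)) = ((2 * (n * (n - 1)) : ℕ) : ℚ) := by push_cast; ring
      _ < ((4 * (n + n * (n - 1) / 2) : ℕ) : ℚ) := by exact_mod_cast hnat
      _ = 4 * ((n + n * (n - 1) / 2 : ℕ) : ℚ) := by push_cast; ring
  · intro m H σH φ hφ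
    have hinj : Function.Injective (fun i : Fin n => φ (Sum.inl i)) := by
      intro i j hij
      simp only [] at hij
      by_contra hne
      rcases lt_or_gt_of_ne hne with h | h
      case _ =>
        set p : Pairs n := ⟨(i, j), h⟩ with hp
        have h1 := (hφ (Sum.inl i) (Sum.inr p) (Or.inl rfl)).2
        have h2 := (hφ (Sum.inl j) (Sum.inr p) (Or.inr rfl)).2
        rw [hij] at h1
        rw [h1] at h2
        simp [subKSign, hp] at h2
        exact hne h2.symm
      case _ =>
        set p : Pairs n := ⟨(j, i), h⟩ with hp
        have h1 := (hφ (Sum.inl j) (Sum.inr p) (Or.inl rfl)).2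
        have h2 := (hφ (Sum.inl i) (Sum.inr p) (Or.inr rfl)).2
        rw [← hij] at h1
        rw [h1] at h2
        simp [subKSign, hp] at h2
        exact hne h2
    have := Fintype.card_le_of_injective _ hinj
    simpa using this
end

section
/- In the signed Paley graph SP_9 on F_9, for every ordered pair of distinct vertices (u,v) and every pair of signs (α,β) ∈ {−1,+1}², there exists at least one vertex w distinct from u and v with s(uw) = α and s(vw) = β; i.e., SP_9 has property P_{2,1}. -/
/-- The signed Paley graph `SP_9` has property `P_{2,1}`: for every ordered
pair of distinct vertices `(u,v)` of `F_9` and every pair of signs, there is a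
vertex `w` distinct from `u` and `v` such that `u - w` is a nonzero square iff
the first sign is positive, and `v - w` is a nonzero square iff the second sign
is positive. -/
theorem signedPaley9_P21 {F : Type*} [Field F] [Fintype F]
    (hF : Fintype.card F = 9) (u v : F) (huv : u ≠ v) (α β : Bool) :
    ∃ w : F, w ≠ u ∧ w ≠ v ∧
      (IsSquare (u - w) ↔ α = true) ∧ (IsSquare (v - w) ↔ β = true) := by
  -- basic characteristic facts
  have h9 : (9 : F) = 0 := by
    have := FiniteField.cast_card_eq_zero F
    rw [hF] at this
    exact_mod_cast this
  have h3 : (3 : F) = 0 := by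
    have h : (3 : F) * 3 = 0 := by linear_combination h9
    rcases mul_eq_zero.mp h with h | h <;> exact h
  have h2 : (2 : F) ≠ 0 := by
    intro h
    exact one_ne_zero (α := F) (by linear_combination h3 - h)
  have hneg1 : (-1 : F) ≠ 1 := by
    intro h
    exact h2 (by linear_combination -h)
  have hchar : ringChar F ≠ 2 := by
    intro h
    apply h2
    have := ringChar.Nat.cast_ringChar (R := F)
    rw [h] at this
    exact_mod_cast this
  -- squares are exactly the fourth roots of unity (among nonzero elements)
  have hsq : ∀ x : F, x ≠ 0 → (IsSquare x ↔ x ^ 4 = 1) := by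
    intro x hx
    have := FiniteField.isSquare_iff hchar hx
    rwa [hF] at this
  have h4 : ∀ x : F, x ≠ 0 → x ^ 4 = 1 ∨ x ^ 4 = -1 := by
    intro x hx
    have h8 : x ^ 8 = 1 := by
      have := FiniteField.pow_card_sub_one_eq_one x hx
      rwa [hF] at this
    have h : (x ^ 4 - 1) * (x ^ 4 + 1) = 0 := by linear_combination h8
    rcases mul_eq_zero.mp h with h | h
    · exact Or.inl (by linear_combination h)
    · exact Or.inr (by linear_combination h)
  -- a square root of -1
  obtain ⟨i, hi⟩ : IsSquare (-1 : F) := by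
    rw [FiniteField.isSquare_neg_one_iff, hF]
    decide
  have hi2 : i ^ 2 = -1 := by rw [sq]; exact hi.symm
  have hi0 : i ≠ 0 := by
    intro h
    rw [h] at hi2
    exact one_ne_zero (α := F) (by linear_combination hi2)
  have hine1 : i ≠ 1 := by
    intro h
    rw [h] at hi2
    exact hneg1 (by linear_combination -hi2)
  have hinem1 : i ≠ -1 := by
    intro h
    rw [h] at hi2
    exact hneg1 (by linear_combination -hi2)
  -- fourth powers of key elements
  have p1 : (1 : F) ^ 4 = 1 := one_pow 4
  have p2 : (2 : F) ^ 4 = 1 := by linear_combination 5 * h3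
  have pi : i ^ 4 = 1 := by linear_combination (i ^ 2 - 1) * hi2
  have p1i : (1 + i) ^ 4 = -1 := by
    linear_combination (i ^ 2 + 4 * i + 5) * hi2 - h3
  have p2i : (2 + i) ^ 4 = -1 := by
    linear_combination (i ^ 2 + 8 * i + 23) * hi2 + (8 * i - 2) * h3
  have p3i : (3 + i : F) = i := by linear_combination h3
  -- the key existence lemma for the normalized problem
  have key : ∀ e₁ e₂ : F, (e₁ = 1 ∨ e₁ = -1) → (e₂ = 1 ∨ e₂ = -1) →
      ∃ c : F, c ≠ 0 ∧ c ≠ -1 ∧ c ^ 4 = e₁ ∧ (c + 1) ^ 4 = e₂ := by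
    rintro e₁ e₂ (rfl | rfl) (rfl | rfl)
    · exact ⟨1, one_ne_zero, fun h => hneg1 h.symm, p1, by linear_combination 5 * h3⟩
    · exact ⟨i, hi0, hinem1, pi, by rw [add_comm]; exact p1i⟩
    · refine ⟨2 + i, ?_, ?_, p2i, ?_⟩
      · intro h
        apply hine1
        linear_combination h - h3
      · intro h
        apply hi0
        linear_combination h - h3
      · rw [show (2 + i + 1 : F) = 3 + i by ring, p3i]
        exact pi
    · refine ⟨1 + i, ?_, ?_, p1i, ?_⟩
      · intro h
        apply hinem1
        linear_combination h
      · intro h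
        apply hine1
        linear_combination h - h3
      · rw [show (1 + i + 1 : F) = 2 + i by ring]
        exact p2i
  -- set up the main argument
  set d : F := v - u with hd_def
  have hd : d ≠ 0 := sub_ne_zero.mpr (Ne.symm huv)
  have hd4 : d ^ 4 = 1 ∨ d ^ 4 = -1 := h4 d hd
  have hd8 : d ^ 8 = 1 := by
    rcases hd4 with h | h
    · calc d ^ 8 = (d ^ 4) ^ 2 := by ring
        _ = 1 := by rw [h]; norm_num
    · calc d ^ 8 = (d ^ 4) ^ 2 := by ring
        _ = 1 := by rw [h]; norm_num
  set sα : F := if α then 1 else -1 with hsα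
  set sβ : F := if β then 1 else -1 with hsβ
  have hsα' : sα = 1 ∨ sα = -1 := by rcases α <;> simp [hsα]
  have hsβ' : sβ = 1 ∨ sβ = -1 := by rcases β <;> simp [hsβ]
  have he₁ : sα * d ^ 4 = 1 ∨ sα * d ^ 4 = -1 := by
    rcases hsα' with h | h <;> rcases hd4 with h' | h' <;>
      rw [h, h'] <;> norm_num
  have he₂ : sβ * d ^ 4 = 1 ∨ sβ * d ^ 4 = -1 := by
    rcases hsβ' with h | h <;> rcases hd4 with h' | h' <;>
      rw [h, h'] <;> norm_num
  obtain ⟨c, hc0, hcm1, hc4, hc14⟩ := key _ _ he₁ he₂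
  refine ⟨u - c * d, ?_, ?_, ?_, ?_⟩
  · intro h
    apply mul_ne_zero hc0 hd
    linear_combination -h
  · intro h
    apply hcm1
    have : (c + 1) * d = 0 := by linear_combination -h
    rcases mul_eq_zero.mp this with h' | h'
    · linear_combination h'
    · exact absurd h' hd
  · have huw : u - (u - c * d) = c * d := by ring
    rw [huw, hsq _ (mul_ne_zero hc0 hd)]
    have : (c * d) ^ 4 = sα := by
      calc (c * d) ^ 4 = c ^ 4 * d ^ 4 := by ring
        _ = sα * d ^ 4 * d ^ 4 := by rw [hc4]
        _ = sα * d ^ 8 := by ring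
        _ = sα := by rw [hd8, mul_one]
    rw [this]
    rcases α with _ | _
    · simp only [hsα, if_neg Bool.false_ne_true, Bool.false_eq_true, iff_false]
      intro h; exact hneg1 h
    · simp [hsα]
  · have hvw : v - (u - c * d) = (c + 1) * d := by rw [hd_def]; ring
    have hcd1 : (c + 1) * d ≠ 0 := by
      apply mul_ne_zero _ hd
      intro h
      exact hcm1 (by linear_combination h)
    rw [hvw, hsq _ hcd1]
    have : ((c + 1) * d) ^ 4 = sβ := by
      calc ((c + 1) * d) ^ 4 = (c + 1) ^ 4 * d ^ 4 := by ring
        _ = sβ * d ^ 4 * d ^ 4 := by rw [hc14]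
        _ = sβ * d ^ 8 := by ring
        _ = sβ := by rw [hd8, mul_one]
    rw [this]
    rcases β with _ | _
    · simp only [hsβ, if_neg Bool.false_ne_true, Bool.false_eq_true, iff_false]
      intro h; exact hneg1 h
    · simp [hsβ]
end
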